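/- Let r be a positive integer relatively prime to 6, and set (a_0, a_1, a_2, a_3) = (2, 3, r, 6r). Then, in ℚ, ∑_{S ⊆ {0,1,2,3}} (−1)^{4−|S|} · (∏_{i∈S} a_i) / lcm_{i∈S}(a_i) = 2(r − 1), where the empty product equals 1 and the lcm over the empty set equals 1. -/

import Mathlib

/-- Milnor–Orlik computation of `b_2` for the link `L(2, 3, r, 6r)` with `r` prime to `6`:
`∑_{S ⊆ {0,1,2,3}} (-1)^{4-|S|} (∏_{i∈S} a_i)/lcm_{i∈S}(a_i) = 2(r-1)`. -/
theorem milnor_orlik_2_3_r_6r (r : ℕ) (hr : 0 < r) (hcop : Nat.Coprime r 6) :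
    (∑ S : Finset (Fin 4), (-1 : ℚ) ^ (4 - S.card) *
        (∏ i ∈ S, (((![2, 3, r, 6 * r] : Fin 4 → ℕ) i : ℚ))) /
        ((S.lcm (![2, 3, r, 6 * r] : Fin 4 → ℕ) : ℕ) : ℚ)) =
      2 * ((r : ℚ) - 1) := by
  have hlr : ∀ a b : ℕ, a ∣ b → lcm a b = b := fun a b h =>
    (lcm_eq_right_iff a b (normalize_eq b)).mpr h
  have h2 : Nat.Coprime 2 r := (hcop.coprime_dvd_right (by norm_num)).symm
  have h3 : Nat.Coprime 3 r := (hcop.coprime_dvd_right (by norm_num)).symm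
  have e1 : lcm r (6 * r) = 6 * r := hlr _ _ (dvd_mul_left r 6)
  have e2 : lcm 2 (6 * r) = 6 * r := hlr _ _ ⟨3 * r, by ring⟩
  have e3 : lcm 3 (6 * r) = 6 * r := hlr _ _ ⟨2 * r, by ring⟩
  have e4 : lcm 2 r = 2 * r := h2.lcm_eq_mul
  have e5 : lcm 3 r = 3 * r := h3.lcm_eq_mul
  have e6 : lcm 2 (3 * r) = 6 * r :=
    (Nat.Coprime.mul_right (by decide) h2).lcm_eq_mul.trans (by ring)
  have e7 : lcm 2 3 = (6 : ℕ) := by decide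
  have huniv : (Finset.univ : Finset (Finset (Fin 4))) =
      {∅, {0}, {1}, {2}, {3}, {0,1}, {0,2}, {0,3}, {1,2}, {1,3}, {2,3},
       {0,1,2}, {0,1,3}, {0,2,3}, {1,2,3}, {0,1,2,3}} := by decide
  rw [huniv]
  repeat rw [Finset.sum_insert (by decide)]
  rw [Finset.sum_singleton]
  repeat rw [Finset.prod_insert (by decide)]
  repeat rw [Finset.card_insert_of_notMem (by decide)]
  simp only [Finset.prod_singleton, Finset.prod_empty, Finset.card_singleton,
    Finset.card_empty, Finset.lcm_insert, Finset.lcm_singleton, Finset.lcm_empty,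
    Matrix.cons_val_zero, Matrix.cons_val_one, Matrix.head_cons,
    Matrix.cons_val_two, Matrix.cons_val_three, Matrix.tail_cons,
    normalize_eq, e1, e2, e3, e4, e5, e6, e7]
  have hr' : (r : ℚ) ≠ 0 := Nat.cast_ne_zero.mpr hr.ne'
  push_cast
  field_simp
  ring
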